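/- (Preservation of the PBH observability condition under the hierarchical weighting.) Let A, Q₁, Q₂ ∈ ℝ^{n×n} with Q₁ and Q₂ symmetric positive semidefinite, and let K ∈ ℝ^{N×N} be symmetric positive semidefinite. Suppose that for every λ ∈ ℂ and every nonzero v ∈ ℂⁿ with Av = λv one has Q₁v ≠ 0. Then for every λ ∈ ℂ and every nonzero x ∈ ℂ^{Nn} with (I_N⊗A)x = λx, one has (I_N⊗Q₁ + K⊗Q₂)x ≠ 0. -/

import Mathlib

open Matrix
open scoped Kronecker ComplexOrder

lemma psd_exists_ct {m : Type*} [Fintype m] [DecidableEq m]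
    {M : Matrix m m ℝ} (hM : M.PosSemidef) : ∃ B : Matrix m m ℝ, M = Bᴴ * B := by
  open scoped MatrixOrder in
  obtain ⟨B, rfl⟩ := CStarAlgebra.nonneg_iff_eq_star_mul_self.mp hM.nonneg
  exact ⟨B, rfl⟩

/-- Complexification of a real PSD matrix is PSD. -/
lemma psd_map_ofReal {m : Type*} [Fintype m] [DecidableEq m]
    {M : Matrix m m ℝ} (hM : M.PosSemidef) :
    (M.map Complex.ofReal).PosSemidef := by
  obtain ⟨B, rfl⟩ := psd_exists_ct hM
  rw [Matrix.conjTranspose_eq_transpose_of_trivial]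
  have h : (Bᵀ * B).map Complex.ofReal
      = (B.map Complex.ofReal)ᴴ * (B.map Complex.ofReal) := by
    have : (Bᵀ * B).map (Complex.ofRealHom : ℝ →+* ℂ)
        = Bᵀ.map Complex.ofRealHom * B.map Complex.ofRealHom :=
      Matrix.map_mul
    rw [show ((Complex.ofRealHom : ℝ →+* ℂ) : ℝ → ℂ) = Complex.ofReal from rfl] at this
    rw [this]
    congr 1
    ext i j
    simp [Matrix.conjTranspose_apply, Complex.conj_ofReal]
  rw [h]
  exact Matrix.posSemidef_conjTranspose_mul_self _

/-- Kronecker product of real PSD matrices is PSD. -/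
lemma psd_kronecker {m p : Type*} [Fintype m] [DecidableEq m] [Fintype p] [DecidableEq p]
    {M : Matrix m m ℝ} {P : Matrix p p ℝ} (hM : M.PosSemidef) (hP : P.PosSemidef) :
    (M ⊗ₖ P).PosSemidef := by
  obtain ⟨B, rfl⟩ := psd_exists_ct hM
  obtain ⟨C, rfl⟩ := psd_exists_ct hP
  rw [Matrix.conjTranspose_eq_transpose_of_trivial B, Matrix.conjTranspose_eq_transpose_of_trivial C,
    Matrix.mul_kronecker_mul]
  have h : Bᵀ ⊗ₖ Cᵀ = (B ⊗ₖ C)ᴴ := by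
    rw [Matrix.conjTranspose_eq_transpose_of_trivial]
    exact Matrix.kroneckerMap_transpose _ _ _
  rw [h]
  exact Matrix.posSemidef_conjTranspose_mul_self _

lemma kron_one_mulVec {n N : ℕ} (B : Matrix (Fin n) (Fin n) ℝ)
    (x : Fin N × Fin n → ℂ) (i : Fin N) (j : Fin n) :
    (((1 : Matrix (Fin N) (Fin N) ℝ) ⊗ₖ B).map Complex.ofReal).mulVec x (i, j)
      = (B.map Complex.ofReal).mulVec (fun l => x (i, l)) j := by
  simp [Matrix.mulVec, dotProduct, Fintype.sum_prod_type, Matrix.kroneckerMap_apply,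
    Matrix.one_apply, apply_ite (Complex.ofReal), ite_mul]

/-- Preservation of the PBH observability condition under the hierarchical weighting:
if `Q₁v ≠ 0` for every eigenvector `v` of `A`, then `(I_N⊗Q₁ + K⊗Q₂)x ≠ 0` for every
eigenvector `x` of `I_N⊗A`. -/
theorem stmt_17 {n N : ℕ}
    (A Q₁ Q₂ : Matrix (Fin n) (Fin n) ℝ)
    (hQ₁ : Q₁.PosSemidef) (hQ₂ : Q₂.PosSemidef)
    (K : Matrix (Fin N) (Fin N) ℝ) (hK : K.PosSemidef)
    (hPBH : ∀ (lam : ℂ) (v : Fin n → ℂ), v ≠ 0 →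
      (A.map Complex.ofReal).mulVec v = lam • v → (Q₁.map Complex.ofReal).mulVec v ≠ 0) :
    ∀ (lam : ℂ) (x : Fin N × Fin n → ℂ), x ≠ 0 →
      (((1 : Matrix (Fin N) (Fin N) ℝ) ⊗ₖ A).map Complex.ofReal).mulVec x = lam • x →
      (((1 : Matrix (Fin N) (Fin N) ℝ) ⊗ₖ Q₁ + K ⊗ₖ Q₂).map Complex.ofReal).mulVec x ≠ 0 := by
  intro lam x hx heig hzero
  set M₁ := ((1 : Matrix (Fin N) (Fin N) ℝ) ⊗ₖ Q₁).map Complex.ofReal with hM₁def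
  set M₂ := (K ⊗ₖ Q₂).map Complex.ofReal with hM₂def
  have hsplit : (((1 : Matrix (Fin N) (Fin N) ℝ) ⊗ₖ Q₁ + K ⊗ₖ Q₂).map Complex.ofReal)
      = M₁ + M₂ := by
    ext i j
    simp [hM₁def, hM₂def, Matrix.map_apply]
  have hpsd₁ : M₁.PosSemidef :=
    psd_map_ofReal (psd_kronecker Matrix.PosSemidef.one hQ₁)
  have hpsd₂ : M₂.PosSemidef := psd_map_ofReal (psd_kronecker hK hQ₂)
  rw [hsplit] at hzero
  -- quadratic form vanishes
  have hdot : star x ⬝ᵥ M₁ *ᵥ x + star x ⬝ᵥ M₂ *ᵥ x = 0 := by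
    rw [← dotProduct_add, ← Matrix.add_mulVec, hzero, dotProduct_zero]
  have h1nn : (0 : ℂ) ≤ star x ⬝ᵥ M₁ *ᵥ x := hpsd₁.dotProduct_mulVec_nonneg x
  have h2nn : (0 : ℂ) ≤ star x ⬝ᵥ M₂ *ᵥ x := hpsd₂.dotProduct_mulVec_nonneg x
  have h1le : star x ⬝ᵥ M₁ *ᵥ x ≤ 0 := hdot ▸ le_add_of_nonneg_right h2nn
  have h1z : star x ⬝ᵥ M₁ *ᵥ x = 0 := le_antisymm h1le h1nn
  have hM₁x : M₁ *ᵥ x = 0 := (hpsd₁.dotProduct_mulVec_zero_iff x).mp h1z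
  -- pick a nonzero block
  obtain ⟨⟨i, j⟩, hij⟩ := Function.ne_iff.mp hx
  set v : Fin n → ℂ := fun l => x (i, l) with hvdef
  have hv : v ≠ 0 := fun h => hij (congrFun h j)
  have heigv : (A.map Complex.ofReal).mulVec v = lam • v := by
    funext j'
    have := congrFun heig (i, j')
    rw [kron_one_mulVec A x i j'] at this
    exact this
  have hQv : (Q₁.map Complex.ofReal).mulVec v = 0 := by
    funext j'
    have := congrFun hM₁x (i, j')
    rw [hM₁def, kron_one_mulVec Q₁ x i j'] at this
    exact this
  exact hPBH lam v hv heigv hQv
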